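/- arXiv:2309.07941 — 2 statements merged into one kernel-verified Lean document; each statement's English description precedes it below -/
import Mathlib

section
/- Let (V_k) be a nonnegative adapted process with E[V_{k+1} | F_k] ≤ α·V_k + ϖ, with α ∈ (0,1), ϖ ≥ 0. For any threshold λ > 0 with λ ≥ ϖ/(1−α), we have P{max_{0 ≤ k ≤ T} V_k ≥ λ} ≤ 1 − (1 − V_0/λ)(1 − ϖ/λ)^T. -/
open MeasureTheory

/-- Finite-horizon reachability bound, case `λ ≥ ϖ / (1 - α)`:
`P {max_{0 ≤ k ≤ T} V k ≥ λ} ≤ 1 - (1 - V 0 / λ) * (1 - ϖ / λ) ^ T`. -/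
theorem stmt2 {Ω : Type*} {m0 : MeasurableSpace Ω} (μ : Measure Ω) [IsProbabilityMeasure μ]
    (F : Filtration ℕ m0) (V : ℕ → Ω → ℝ) (α ϖ : ℝ) (v0 lam : ℝ)
    (hα0 : 0 < α) (hα1 : α < 1) (hϖ : 0 ≤ ϖ)
    (hadp : Adapted F V)
    (hnn : ∀ k, 0 ≤ᵐ[μ] V k)
    (hint : ∀ k, Integrable (V k) μ)
    (hV0 : V 0 = fun _ => v0)
    (hdrift : ∀ k, μ[V (k + 1) | F k] ≤ᵐ[μ] fun ω => α * V k ω + ϖ)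
    (hlam : 0 < lam) (hv0 : v0 < lam) (hlam2 : ϖ / (1 - α) ≤ lam) (T : ℕ) :
    μ {ω | ∃ k ≤ T, lam ≤ V k ω} ≤
      ENNReal.ofReal (1 - (1 - v0 / lam) * (1 - ϖ / lam) ^ T) := by
  have hlne : lam ≠ 0 := hlam.ne'
  set b := ϖ / lam with hb
  have hb0 : 0 ≤ b := div_nonneg hϖ hlam.le
  have h1α : (0:ℝ) < 1 - α := by linarith
  have hϖle : ϖ ≤ lam * (1 - α) := by
    have := (div_le_iff₀ h1α).mp hlam2
    linarith
  have hb1 : b ≤ 1 - α := by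
    rw [hb, div_le_iff₀ hlam]; nlinarith
  have hblam : b * lam = ϖ := div_mul_cancel₀ ϖ hlne
  set A : ℕ → Set Ω := fun k => {ω | ∀ j ≤ k, V j ω < lam} with hAdef
  have hAFk : ∀ k, MeasurableSet[F k] (A k) := by
    intro k
    have : A k = ⋂ j ∈ Finset.Iic k, {ω | V j ω < lam} := by
      ext ω; simp [hAdef]
    rw [this]
    exact Finset.measurableSet_biInter _ fun j hj =>
      measurableSet_lt ((hadp j).mono (F.mono (Finset.mem_Iic.mp hj)) le_rfl)
        measurable_const
  have hA : ∀ k, MeasurableSet (A k) := fun k => (F.le k) _ (hAFk k)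
  have hsub : ∀ k, A (k+1) ⊆ A k := fun k ω h j hj => h j (hj.trans (Nat.le_succ k))
  have key : ∀ k, (lam - v0) * (1 - b) ^ k ≤ ∫ ω in A k, (lam - V k ω) ∂μ := by
    intro k
    induction k with
    | zero =>
      have hA0 : A 0 = Set.univ := by
        ext ω
        simp only [hAdef, Set.mem_setOf_eq, Set.mem_univ, iff_true, Nat.le_zero]
        intro j hj
        subst hj
        rw [hV0]; exact hv0
      rw [hA0, Measure.restrict_univ, hV0]
      simp
    | succ k ih =>
      have hintc : Integrable (fun ω => lam - V (k+1) ω) μ :=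
        (integrable_const lam).sub (hint (k+1))
      have h1 : ∫ ω in A k, (lam - V (k+1) ω) ∂μ ≤ ∫ ω in A (k+1), (lam - V (k+1) ω) ∂μ := by
        rw [← integral_indicator (hA (k+1)), ← integral_indicator (hA k)]
        apply integral_mono (hintc.indicator (hA k)) (hintc.indicator (hA (k+1)))
        intro ω
        by_cases h1 : ω ∈ A (k+1)
        · rw [Set.indicator_of_mem h1, Set.indicator_of_mem (hsub k h1)]
        · rw [Set.indicator_of_notMem h1]
          by_cases h2 : ω ∈ A k
          · rw [Set.indicator_of_mem h2]
            have : lam ≤ V (k+1) ω := by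
              by_contra hc
              push_neg at hc
              exact h1 fun j hj => by
                rcases Nat.lt_or_ge j (k+1) with hj' | hj'
                · exact h2 j (Nat.lt_succ_iff.mp hj')
                · have : j = k + 1 := le_antisymm hj hj'
                  rw [this]; exact hc
            linarith
          · rw [Set.indicator_of_notMem h2]
      have h2 : ∫ ω in A k, V (k+1) ω ∂μ = ∫ ω in A k, (μ[V (k+1) | F k]) ω ∂μ :=
        (setIntegral_condExp (F.le k) (hint (k+1)) (hAFk k)).symm
      have hintd : Integrable (fun ω => α * V k ω + ϖ) μ :=
        ((hint k).const_mul α).add (integrable_const ϖ)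
      have h3 : ∫ ω in A k, (μ[V (k+1) | F k]) ω ∂μ ≤ ∫ ω in A k, (α * V k ω + ϖ) ∂μ := by
        apply integral_mono_ae integrable_condExp.restrict hintd.restrict
        exact ae_restrict_of_ae (hdrift k)
      have h4 : ∫ ω in A k, (lam - V (k+1) ω) ∂μ
          = ∫ ω in A k, (lam : ℝ) ∂μ - ∫ ω in A k, V (k+1) ω ∂μ :=
        integral_sub (integrable_const lam).restrict (hint (k+1)).restrict
      have h5 : ∫ ω in A k, (lam - (α * V k ω + ϖ)) ∂μ
          = ∫ ω in A k, (lam : ℝ) ∂μ - ∫ ω in A k, (α * V k ω + ϖ) ∂μ :=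
        integral_sub (integrable_const lam).restrict hintd.restrict
      have h6 : ∫ ω in A k, ((1 - b) * (lam - V k ω)) ∂μ
          ≤ ∫ ω in A k, (lam - (α * V k ω + ϖ)) ∂μ := by
        apply integral_mono_ae
          ((((integrable_const lam).sub (hint k)).const_mul (1-b)).restrict)
          (((integrable_const lam).sub hintd).restrict)
        apply ae_restrict_of_ae
        filter_upwards [hnn k] with ω hω
        simp only [Pi.zero_apply] at hω
        show (1 - b) * (lam - V k ω) ≤ lam - (α * V k ω + ϖ)
        nlinarith [mul_nonneg (by linarith : (0:ℝ) ≤ 1 - α - b) hω, hblam]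
      have h7 : ∫ ω in A k, ((1 - b) * (lam - V k ω)) ∂μ
          = (1 - b) * ∫ ω in A k, (lam - V k ω) ∂μ := by
        rw [integral_const_mul]
      have hbl1 : (0:ℝ) ≤ 1 - b := by linarith
      calc (lam - v0) * (1 - b) ^ (k+1)
          = (1 - b) * ((lam - v0) * (1 - b) ^ k) := by ring
        _ ≤ (1 - b) * ∫ ω in A k, (lam - V k ω) ∂μ := by
            exact mul_le_mul_of_nonneg_left ih hbl1
        _ = ∫ ω in A k, ((1 - b) * (lam - V k ω)) ∂μ := h7.symm
        _ ≤ ∫ ω in A k, (lam - (α * V k ω + ϖ)) ∂μ := h6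
        _ = ∫ ω in A k, (lam : ℝ) ∂μ - ∫ ω in A k, (α * V k ω + ϖ) ∂μ := h5
        _ ≤ ∫ ω in A k, (lam : ℝ) ∂μ - ∫ ω in A k, (μ[V (k+1) | F k]) ω ∂μ := by linarith
        _ = ∫ ω in A k, (lam : ℝ) ∂μ - ∫ ω in A k, V (k+1) ω ∂μ := by rw [h2]
        _ = ∫ ω in A k, (lam - V (k+1) ω) ∂μ := h4.symm
        _ ≤ ∫ ω in A (k+1), (lam - V (k+1) ω) ∂μ := h1
  -- final step
  have hup : ∫ ω in A T, (lam - V T ω) ∂μ ≤ lam * (μ (A T)).toReal := by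
    have : ∫ ω in A T, (lam - V T ω) ∂μ ≤ ∫ ω in A T, (lam : ℝ) ∂μ := by
      apply integral_mono_ae (((integrable_const lam).sub (hint T)).restrict)
        (integrable_const lam).restrict
      apply ae_restrict_of_ae
      filter_upwards [hnn T] with ω hω
      simp only [Pi.zero_apply] at hω
      show lam - V T ω ≤ lam
      linarith
    simpa [mul_comm, ← measureReal_def] using this
  have hAT : (1 - v0/lam) * (1 - b) ^ T ≤ (μ (A T)).toReal := by
    rw [← mul_le_mul_iff_of_pos_right hlam]
    have he : (1 - v0 / lam) * (1 - b) ^ T * lam = (lam - v0) * (1 - b) ^ T := by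
      field_simp
    rw [he]
    calc (lam - v0) * (1 - b) ^ T ≤ lam * (μ (A T)).toReal := (key T).trans hup
      _ = (μ (A T)).toReal * lam := mul_comm _ _
  have hScompl : {ω | ∃ k ≤ T, lam ≤ V k ω} = (A T)ᶜ := by
    ext ω
    simp only [hAdef, Set.mem_setOf_eq, Set.mem_compl_iff, not_forall, not_lt]
    constructor
    · rintro ⟨k, hk, h⟩; exact ⟨k, hk, h⟩
    · rintro ⟨k, hk, h⟩; exact ⟨k, hk, h⟩
  rw [hScompl]
  have hμc : μ (A T)ᶜ = 1 - μ (A T) := by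
    rw [measure_compl (hA T) (measure_ne_top μ _), measure_univ]
  rw [hμc]
  have hne : μ (A T) ≠ ⊤ := measure_ne_top μ _
  have h1' : (1 : ENNReal) - μ (A T) = ENNReal.ofReal (1 - (μ (A T)).toReal) := by
    rw [ENNReal.ofReal_sub _ ENNReal.toReal_nonneg, ENNReal.ofReal_one,
      ENNReal.ofReal_toReal hne]
  rw [h1']
  apply ENNReal.ofReal_le_ofReal
  linarith
end

section
/- Let (V_k) be a nonnegative adapted process with E[V_{k+1} | F_k] ≤ α·V_k + ϖ, where α ∈ (0,1), ϖ ≥ 0. For any λ > 0 with λ < ϖ/(1−α), we have P{max_{0 ≤ k ≤ T} V_k ≥ λ} ≤ (V_0/λ)·α^T + (ϖ/((1−α)·λ))·(1 − α^T). -/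
open MeasureTheory

/-- Maximal inequality for nonnegative supermartingales. -/
lemma supermart_max_ineq {Ω : Type*} {m0 : MeasurableSpace Ω} (μ : Measure Ω)
    [IsProbabilityMeasure μ] (F : Filtration ℕ m0) (Y : ℕ → Ω → ℝ)
    (hY : Supermartingale Y F μ) (hnn : ∀ k, 0 ≤ᵐ[μ] Y k) {lam : ℝ} (hlam : 0 < lam) (T : ℕ) :
    ENNReal.ofReal lam * μ {ω | ∃ k ≤ T, lam ≤ Y k ω} ≤ ENNReal.ofReal (∫ ω, Y 0 ω ∂μ) := by
  set τ : Ω → WithTop ℕ := fun ω => (hittingBtwn Y (Set.Ici lam) 0 T ω : ℕ) with hτdef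
  have hτ : IsStoppingTime F τ := hittingBtwn_isStoppingTime hY.stronglyAdapted.adapted measurableSet_Ici
  have hτle : ∀ ω, τ ω ≤ T := fun ω => WithTop.coe_le_coe.2 (hittingBtwn_le ω)
  have hsvint : Integrable (stoppedValue Y τ) μ :=
    integrable_stoppedValue ℕ hτ hY.integrable hτle
  have hAmeas : MeasurableSet {ω | ∃ k ≤ T, lam ≤ Y k ω} := by
    have : {ω | ∃ k ≤ T, lam ≤ Y k ω} = ⋃ k ∈ Set.Iic T, {ω | lam ≤ Y k ω} := by
      ext ω; simp
    rw [this]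
    exact MeasurableSet.biUnion (Set.to_countable _) fun k _ =>
      measurableSet_le measurable_const ((hY.stronglyMeasurable k).measurable.le (F.le k))
  have hset : ∀ ω ∈ {ω | ∃ k ≤ T, lam ≤ Y k ω}, lam ≤ stoppedValue Y τ ω := by
    rintro ω ⟨k, hk, hω⟩
    exact stoppedValue_hittingBtwn_mem ⟨k, ⟨Nat.zero_le _, hk⟩, hω⟩
  have h1 : lam * (μ {ω | ∃ k ≤ T, lam ≤ Y k ω}).toReal ≤
      ∫ ω in {ω | ∃ k ≤ T, lam ≤ Y k ω}, stoppedValue Y τ ω ∂μ :=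
    (le_of_eq (by rw [smul_eq_mul, mul_comm]; rfl)).trans
      (setIntegral_ge_of_const_le hAmeas (measure_ne_top _ _) hset hsvint.integrableOn)
  have hnnsv : 0 ≤ᵐ[μ] stoppedValue Y τ := by
    filter_upwards [(ae_all_iff).2 hnn] with ω hω using hω _
  have h2 : ∫ ω in {ω | ∃ k ≤ T, lam ≤ Y k ω}, stoppedValue Y τ ω ∂μ ≤ ∫ ω, stoppedValue Y τ ω ∂μ :=
    setIntegral_le_integral hsvint hnnsv
  have h3 : ∫ ω, stoppedValue Y τ ω ∂μ ≤ ∫ ω, Y 0 ω ∂μ := by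
    have hsub := hY.neg
    have h := hsub.expected_stoppedValue_mono (isStoppingTime_const F 0) hτ
      (fun ω => zero_le) hτle
    rw [stoppedValue_const] at h
    have hsv : stoppedValue (-Y) τ = fun ω => -(stoppedValue Y τ ω) := rfl
    rw [hsv] at h
    simp only [Pi.neg_apply] at h
    rw [integral_neg, integral_neg] at h
    simpa using neg_le_neg h
  calc ENNReal.ofReal lam * μ {ω | ∃ k ≤ T, lam ≤ Y k ω}
      = ENNReal.ofReal (lam * (μ {ω | ∃ k ≤ T, lam ≤ Y k ω}).toReal) := by
        rw [ENNReal.ofReal_mul hlam.le, ENNReal.ofReal_toReal (measure_ne_top _ _)]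
    _ ≤ ENNReal.ofReal (∫ ω, Y 0 ω ∂μ) := ENNReal.ofReal_le_ofReal (h1.trans (h2.trans h3))

/-- Finite-horizon reachability bound, case `λ < ϖ / (1 - α)`:
`P {max_{0 ≤ k ≤ T} V k ≥ λ} ≤ (V 0 / λ) * α ^ T + (ϖ / ((1 - α) * λ)) * (1 - α ^ T)`. -/
theorem stmt3 {Ω : Type*} {m0 : MeasurableSpace Ω} (μ : Measure Ω) [IsProbabilityMeasure μ]
    (F : Filtration ℕ m0) (V : ℕ → Ω → ℝ) (α ϖ : ℝ) (v0 lam : ℝ)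
    (hα0 : 0 < α) (hα1 : α < 1) (hϖ : 0 ≤ ϖ)
    (hadp : Adapted F V)
    (hnn : ∀ k, 0 ≤ᵐ[μ] V k)
    (hint : ∀ k, Integrable (V k) μ)
    (hV0 : V 0 = fun _ => v0)
    (hdrift : ∀ k, μ[V (k + 1) | F k] ≤ᵐ[μ] fun ω => α * V k ω + ϖ)
    (hlam : 0 < lam) (hlam2 : lam < ϖ / (1 - α)) (T : ℕ) :
    μ {ω | ∃ k ≤ T, lam ≤ V k ω} ≤
      ENNReal.ofReal ((v0 / lam) * α ^ T + (ϖ / ((1 - α) * lam)) * (1 - α ^ T)) := by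
  have h1α : (0:ℝ) < 1 - α := by linarith
  set c : ℝ := ϖ / (1 - α) with hcdef
  have hc0 : 0 ≤ c := div_nonneg hϖ h1α.le
  have hϖc : ϖ = c * (1 - α) := by rw [hcdef]; field_simp
  have hpow1 : ∀ n : ℕ, α ^ n ≤ 1 := fun n => pow_le_one₀ hα0.le hα1.le
  have hpow0 : ∀ n : ℕ, (0:ℝ) ≤ α ^ n := fun n => pow_nonneg hα0.le n
  set Y : ℕ → Ω → ℝ := fun k ω => α ^ (T - k) * V (min k T) ω + c * (1 - α ^ (T - k)) with hYdef
  have hYadp : Adapted F Y := by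
    intro k
    exact ((hadp (min k T)).mono (F.mono (min_le_left k T)) le_rfl).const_mul _ |>.add
      measurable_const
  have hYint : ∀ k, Integrable (Y k) μ := fun k =>
    ((hint (min k T)).const_mul _).add (integrable_const _)
  have hYnn : ∀ k, 0 ≤ᵐ[μ] Y k := by
    intro k
    filter_upwards [hnn (min k T)] with ω hω
    have := hpow1 (T - k)
    have := hpow0 (T - k)
    simp only [Pi.zero_apply] at hω
    simp only [hYdef, Pi.zero_apply]
    nlinarith
  have hYsup : Supermartingale Y F μ := by
    refine supermartingale_nat hYadp.stronglyAdapted hYint fun i => ?_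
    rcases lt_or_ge i T with hiT | hiT
    · -- i < T
      have hmin1 : min (i+1) T = i + 1 := min_eq_left hiT
      have hmini : min i T = i := min_eq_left hiT.le
      have he : T - i = (T - (i+1)) + 1 := by omega
      set e := T - (i+1) with hedef
      have hce : μ[Y (i+1) | F i] =ᵐ[μ]
          fun ω => α ^ e * (μ[V (i+1) | F i]) ω + c * (1 - α ^ e) := by
        have hYeq : Y (i+1) = (α ^ e) • V (i+1) + (fun _ => c * (1 - α ^ e)) := by
          funext ω; simp [hYdef, hmin1, hedef, smul_eq_mul]
        rw [hYeq]
        refine (condExp_add ((hint (i+1)).smul _) (integrable_const _) _).trans ?_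
        have h1 := condExp_smul (μ := μ) (m := F i) (α ^ e) (V (i+1))
        have h2 := condExp_const (μ := μ) (F.le i) (c * (1 - α ^ e))
        rw [h2]
        filter_upwards [h1] with ω hω1
        simp only [Pi.add_apply] at *
        rw [hω1]
        simp [smul_eq_mul]
      filter_upwards [hce, hdrift i] with ω hω hd
      rw [hω]
      have hYi : Y i ω = α ^ (e+1) * V i ω + c * (1 - α ^ (e+1)) := by
        simp [hYdef, hmini, ← he]
      rw [hYi, pow_succ]
      have hmul : α ^ e * (μ[V (i+1) | F i]) ω ≤ α ^ e * (α * V i ω + ϖ) :=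
        mul_le_mul_of_nonneg_left hd (hpow0 e)
      rw [hϖc] at hmul
      nlinarith [hmul]
    · -- i ≥ T : Y (i+1) = Y i = V T, F T-measurable
      have hYeq : Y (i+1) = Y i := by
        funext ω
        simp [hYdef, Nat.sub_eq_zero_of_le hiT, Nat.sub_eq_zero_of_le (hiT.trans (Nat.le_succ i)),
          min_eq_right hiT, min_eq_right (hiT.trans (Nat.le_succ i))]
      rw [hYeq]
      have hsm : StronglyMeasurable[F i] (Y i) :=
        (((hadp (min i T)).mono (F.mono ((min_le_right i T).trans hiT)) le_rfl).const_mul _ |>.add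
          measurable_const).stronglyMeasurable
      exact (Filter.EventuallyEq.of_eq (condExp_of_stronglyMeasurable (F.le i) hsm (hYint i))).le
  -- event inclusion
  have hincl : {ω | ∃ k ≤ T, lam ≤ V k ω} ⊆ {ω | ∃ k ≤ T, lam ≤ Y k ω} := by
    rintro ω ⟨k, hk, hω⟩
    refine ⟨k, hk, ?_⟩
    have h1 := hpow1 (T - k)
    have h0 := hpow0 (T - k)
    simp only [hYdef, min_eq_left hk]
    nlinarith [mul_le_mul_of_nonneg_left hω h0]
  -- expectation of Y 0
  have hEY0 : ∫ ω, Y 0 ω ∂μ = α ^ T * v0 + c * (1 - α ^ T) := by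
    have h : Y 0 = fun _ => α ^ T * v0 + c * (1 - α ^ T) := by
      funext ω; simp [hYdef, hV0]
    rw [h, integral_const]
    simp
  have hmain := supermart_max_ineq μ F Y hYsup hYnn hlam T
  have hfinal : μ {ω | ∃ k ≤ T, lam ≤ V k ω} ≤
      ENNReal.ofReal (∫ ω, Y 0 ω ∂μ) / ENNReal.ofReal lam := by
    refine le_trans (measure_mono hincl) ?_
    rw [ENNReal.le_div_iff_mul_le (Or.inl (by simp [hlam])) (Or.inl ENNReal.ofReal_ne_top)]
    rw [mul_comm]
    exact hmain
  refine hfinal.trans ?_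
  rw [← ENNReal.ofReal_div_of_pos hlam, hEY0]
  refine ENNReal.ofReal_le_ofReal (le_of_eq ?_)
  rw [hcdef]; field_simp
end
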